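/- arXiv:1809.00056 — 4 statements merged into one kernel-verified Lean document; each statement's English description precedes it below -/
import Mathlib

section
/- Let W be an m×m complex Hermitian positive definite matrix and let P, P_T > 0 satisfy P > 1/λ_min(W) and P_T > m/λ_min(W) − tr(W⁻¹). If λ ≥ 0 (with λ = 0 when m·P ≤ P_T, and otherwise λ the solution of Σᵢ min(P, 1/λ − (W⁻¹)ᵢᵢ) = P_T) is the Lagrange multiplier of the total power constraint, then 0 ≤ λ < λ_min(W). -/
open Matrix ComplexOrder

noncomputable def mutualInfo {m : ℕ} (W R : Matrix (Fin m) (Fin m) ℂ) : ℝ :=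
  Real.log ((1 + W * R).det.re)

def jointSet (m : ℕ) (PT P : ℝ) : Set (Matrix (Fin m) (Fin m) ℂ) :=
  {R | R.PosSemidef ∧ R.trace.re ≤ PT ∧ ∀ i, (R i i).re ≤ P}

noncomputable def lamMin {m : ℕ} {W : Matrix (Fin m) (Fin m) ℂ} (hW : W.IsHermitian) : ℝ :=
  sInf (Set.range hW.eigenvalues)

lemma lamMin_pos {m : ℕ} (hm : 1 ≤ m) {W : Matrix (Fin m) (Fin m) ℂ} (hW : W.PosDef) :
    0 < lamMin hW.1 := by
  have : Nonempty (Fin m) := ⟨⟨0, hm⟩⟩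
  have hne : (Set.range hW.1.eigenvalues).Nonempty := Set.range_nonempty _
  have hfin : (Set.range hW.1.eigenvalues).Finite := Set.finite_range _
  have hmem := hne.csInf_mem hfin
  obtain ⟨i, hi⟩ := hmem
  rw [lamMin, ← hi]
  exact hW.eigenvalues_pos i

/-- Bounds on the Lagrange multiplier of the total power constraint:
`0 ≤ λ < λ_min(W)`. -/
theorem stmt4 (m : ℕ) (hm : 1 ≤ m) (W : Matrix (Fin m) (Fin m) ℂ) (hW : W.PosDef)
    (P PT : ℝ) (hP : 0 < P) (hPT : 0 < PT)
    (hPlow : 1 / lamMin hW.1 < P)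
    (hPTlow : m / lamMin hW.1 - (W⁻¹).trace.re < PT)
    (lam : ℝ)
    (hlam1 : m * P ≤ PT → lam = 0)
    (hlam2 : PT < m * P → 0 < lam ∧ ∑ i, min P (1 / lam - (W⁻¹ i i).re) = PT) :
    0 ≤ lam ∧ lam < lamMin hW.1 := by
  have hmin : 0 < lamMin hW.1 := lamMin_pos hm hW
  rcases le_or_gt (m * P) PT with h | h
  · rw [hlam1 h]; exact ⟨le_rfl, hmin⟩
  · obtain ⟨hlam, hsum⟩ := hlam2 h
    refine ⟨hlam.le, ?_⟩
    by_contra hle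
    push_neg at hle
    have hinv : 1 / lam ≤ 1 / lamMin hW.1 := one_div_le_one_div_of_le hmin hle
    have htr : (W⁻¹).trace.re = ∑ i, (W⁻¹ i i).re := by
      simp [Matrix.trace, Matrix.diag, Complex.re_sum]
    have hbound : PT ≤ (m : ℝ) / lamMin hW.1 - (W⁻¹).trace.re := by
      rw [← hsum, htr]
      have : ∑ i, min P (1 / lam - (W⁻¹ i i).re)
          ≤ ∑ i : Fin m, (1 / lamMin hW.1 - (W⁻¹ i i).re) :=
        Finset.sum_le_sum fun i _ =>
          (min_le_right _ _).trans (by linarith [hinv])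
      calc ∑ i, min P (1 / lam - (W⁻¹ i i).re)
          ≤ ∑ i : Fin m, (1 / lamMin hW.1 - (W⁻¹ i i).re) := this
        _ = (m : ℝ) / lamMin hW.1 - ∑ i, (W⁻¹ i i).re := by
            rw [Finset.sum_sub_distrib]
            simp [div_eq_mul_inv, Finset.sum_const, Finset.card_univ, mul_comm]
        _ = _ := rfl
    linarith
end

section
/- Let W be an m×m complex Hermitian positive definite matrix and P, P_T > 0. If R* ∈ S(P_T, P) maximizes log det(I + W·R) over S(P_T, P) and the total power constraint is inactive, i.e. tr R* < P_T, then every per-antenna constraint is active: (R*)ᵢᵢ = P for all i (hence m·P < P_T). Consequently, if at least one per-antenna constraint is inactive at the optimum ((R*)ᵢᵢ < P for some i), then the total power constraint is active (tr R* = P_T). -/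
open Matrix ComplexOrder

lemma diag_pos_of_posDef' {m : ℕ} {M : Matrix (Fin m) (Fin m) ℂ} (hM : M.PosDef) (i : Fin m) :
    (0:ℂ) < M i i := by
  exact hM.diag_pos

lemma det_one_add_mul_diag_single {m : ℕ} (M : Matrix (Fin m) (Fin m) ℂ) (i : Fin m) (ε : ℂ) :
    (1 + M * Matrix.diagonal (Pi.single i ε)).det = 1 + ε * M i i := by
  rw [show M * Matrix.diagonal (Pi.single i ε) =
      replicateCol Unit (fun j => M j i) * replicateRow Unit (Pi.single i ε) by
    ext j k
    rw [Matrix.mul_diagonal, Matrix.mul_apply]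
    simp only [Finset.univ_unique, Finset.sum_singleton, replicateCol, replicateRow, of_apply, Pi.single_apply]
    split <;> simp_all [mul_comm]]
  rw [det_one_add_replicateCol_mul_replicateRow]
  simp [single_dotProduct]

lemma key_lemma {m : ℕ} {W : Matrix (Fin m) (Fin m) ℂ} (hW : W.PosDef)
    {P PT : ℝ} {Rstar : Matrix (Fin m) (Fin m) ℂ} (hmem : Rstar ∈ jointSet m PT P)
    (hopt : ∀ R ∈ jointSet m PT P, mutualInfo W R ≤ mutualInfo W Rstar)
    (htr : Rstar.trace.re < PT) (i : Fin m) : (Rstar i i).re = P := by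
  by_contra hne
  have hi : (Rstar i i).re < P := lt_of_le_of_ne (hmem.2.2 i) hne
  set ε : ℝ := min (PT - Rstar.trace.re) (P - (Rstar i i).re) with hεdef
  have hε0 : 0 < ε := lt_min (by linarith) (by linarith)
  have hε1 : ε ≤ PT - Rstar.trace.re := min_le_left _ _
  have hε2 : ε ≤ P - (Rstar i i).re := min_le_right _ _
  set E : Matrix (Fin m) (Fin m) ℂ := Matrix.diagonal (Pi.single i (ε:ℂ)) with hEdef
  -- basic invertibility facts
  have hWdet : IsUnit W.det := isUnit_iff_ne_zero.mpr hW.det_pos.ne'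
  set B : Matrix (Fin m) (Fin m) ℂ := W⁻¹ + Rstar with hBdef
  have hB : B.PosDef := hW.inv.add_posSemidef hmem.1
  have hBdet : IsUnit B.det := isUnit_iff_ne_zero.mpr hB.det_pos.ne'
  have hA_eq : 1 + W * Rstar = W * B := by
    rw [hBdef, Matrix.mul_add, Matrix.mul_nonsing_inv _ hWdet]
  have hdetA_pos : (0:ℂ) < (1 + W * Rstar).det := by
    rw [hA_eq, det_mul]; exact mul_pos hW.det_pos hB.det_pos
  have hAB : (1 + W * Rstar) * B⁻¹ = W := by
    rw [hA_eq, Matrix.mul_assoc, Matrix.mul_nonsing_inv _ hBdet, Matrix.mul_one]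
  -- the determinant identity
  have hdet' : (1 + W * (Rstar + E)).det
      = (1 + W * Rstar).det * (1 + (ε:ℂ) * B⁻¹ i i) := by
    have hfact : 1 + W * (Rstar + E) = (1 + W * Rstar) * (1 + B⁻¹ * E) := by
      rw [Matrix.mul_add (1 + W * Rstar), Matrix.mul_one, ← Matrix.mul_assoc, hAB,
        Matrix.mul_add W Rstar E, add_assoc]
    rw [hfact, det_mul, hEdef, det_one_add_mul_diag_single]
  -- real/imaginary parts
  have hMii : (0:ℂ) < B⁻¹ i i := diag_pos_of_posDef' hB.inv i
  obtain ⟨hare, haim⟩ := Complex.lt_def.mp hdetA_pos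
  obtain ⟨hcre, hcim⟩ := Complex.lt_def.mp hMii
  simp only [Complex.zero_re, Complex.zero_im] at hare haim hcre hcim
  have hre' : (1 + W * (Rstar + E)).det.re
      = (1 + W * Rstar).det.re * (1 + ε * (B⁻¹ i i).re) := by
    rw [hdet']
    simp [Complex.mul_re, Complex.add_re, Complex.add_im, Complex.mul_im, ← haim, ← hcim]
  -- the perturbed matrix is feasible
  have hmem' : Rstar + E ∈ jointSet m PT P := by
    refine ⟨hmem.1.add (Matrix.posSemidef_diagonal_iff.mpr fun j => ?_), ?_, fun j => ?_⟩
    · rcases eq_or_ne j i with h | h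
      · subst h; rw [Pi.single_eq_same]
        exact_mod_cast hε0.le
      · rw [Pi.single_eq_of_ne h]
    · rw [Matrix.trace_add, Complex.add_re, hEdef, Matrix.trace_diagonal]
      have : ∑ j, Pi.single i (ε:ℂ) j = (ε:ℂ) := by simp
      rw [this]
      simp only [Complex.ofReal_re]
      linarith
    · rcases eq_or_ne j i with h | h
      · subst h
        simp only [Matrix.add_apply, Complex.add_re, hEdef, Matrix.diagonal_apply_eq,
          Pi.single_eq_same, Complex.ofReal_re]
        linarith
      · simp only [Matrix.add_apply, Complex.add_re, hEdef, Matrix.diagonal_apply_eq,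
          Pi.single_eq_of_ne h, Complex.zero_re, add_zero]
        exact hmem.2.2 j
  -- strict improvement contradicts optimality
  have hlt : mutualInfo W Rstar < mutualInfo W (Rstar + E) := by
    unfold mutualInfo
    rw [hre']
    apply Real.log_lt_log hare
    nlinarith [mul_pos hare (mul_pos hε0 hcre)]
  exact absurd (hopt _ hmem') (not_le.mpr hlt)

/-- If the total power constraint is inactive at an optimum, all per-antenna constraints
are active there (hence `m·P < P_T`); consequently, if some per-antenna constraint is
inactive at the optimum, the total power constraint is active. -/
theorem stmt9 (m : ℕ) (hm : 1 ≤ m) (W : Matrix (Fin m) (Fin m) ℂ) (hW : W.PosDef)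
    (P PT : ℝ) (hP : 0 < P) (hPT : 0 < PT)
    (Rstar : Matrix (Fin m) (Fin m) ℂ) (hmem : Rstar ∈ jointSet m PT P)
    (hopt : ∀ R ∈ jointSet m PT P, mutualInfo W R ≤ mutualInfo W Rstar) :
    (Rstar.trace.re < PT → (∀ i, (Rstar i i).re = P) ∧ (m : ℝ) * P < PT) ∧
    ((∃ i, (Rstar i i).re < P) → Rstar.trace.re = PT) := by
  constructor
  · intro htr
    have hall : ∀ i, (Rstar i i).re = P := fun i => key_lemma hW hmem hopt htr i
    refine ⟨hall, ?_⟩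
    have : Rstar.trace.re = (m : ℝ) * P := by
      rw [Matrix.trace, Complex.re_sum]
      simp only [Matrix.diag_apply, hall]
      simp [mul_comm]
    linarith
  · rintro ⟨i, hi⟩
    by_contra h
    have htr : Rstar.trace.re < PT := lt_of_le_of_ne hmem.2.1 h
    exact absurd (key_lemma hW hmem hopt htr i) (ne_of_lt hi)
end

section
/- Let W = diag(w₁, …, w_m) be a diagonal positive definite matrix (orthogonal channel) and let P, P_T > 0 satisfy P > 1/min_i wᵢ and P_T > Σᵢ (1/min_j w_j − 1/wᵢ). With λ ≥ 0 the total-power Lagrange multiplier (λ = 0 if m·P ≤ P_T, otherwise the solution of Σᵢ min(P, 1/λ − 1/wᵢ) = P_T), the diagonal matrix R* = diag(min(P, 1/λ − 1/wᵢ))ᵢ is positive definite, lies in S(P_T, P), and maximizes log det(I + W·R) over R ∈ S(P_T, P); i.e., for an orthogonal channel the optimal covariance is the entrywise minimum of the per-antenna-only optimum P·I and the total-power-only water-filling optimum (1/λ)·I − W⁻¹. -/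
open Matrix ComplexOrder

/-- trace of a Hermitian matrix is the sum of its eigenvalues -/
lemma trace_eq_sum_eigs {n : Type*} [Fintype n] [DecidableEq n] {A : Matrix n n ℂ}
    (hA : A.IsHermitian) : A.trace = ∑ i, (hA.eigenvalues i : ℂ) := by
  conv_lhs => rw [hA.spectral_theorem]
  rw [Unitary.conjStarAlgAut_apply]
  rw [Matrix.trace_mul_cycle,
    (Matrix.mem_unitaryGroup_iff').mp (Matrix.IsHermitian.eigenvectorUnitary hA).2, Matrix.one_mul,
    Matrix.trace_diagonal]
  simp

/-- Key tangent bound: for `R` PSD and positive diagonal `W = diag w`, with any positive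
reference point `q`, `det(I + W R).re` is positive and bounded by the first-order expansion
around `diag q`. -/
lemma key_bound {m : ℕ} (w q : Fin m → ℝ) (hw : ∀ i, 0 < w i) (hq : ∀ i, 0 < q i)
    {R : Matrix (Fin m) (Fin m) ℂ} (hR : R.PosSemidef) :
    0 < (1 + Matrix.diagonal (fun i => (w i : ℂ)) * R).det.re ∧
    (1 + Matrix.diagonal (fun i => (w i : ℂ)) * R).det.re ≤
      (∏ i, (1 + w i * q i)) *
        Real.exp (∑ i, (w i / (1 + w i * q i)) * ((R i i).re - q i)) := by
  have ha : ∀ i, 0 < 1 + w i * q i := fun i => by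
    have := mul_pos (hw i) (hq i); linarith
  set d : Fin m → ℂ := fun i => ((Real.sqrt (w i) : ℝ) : ℂ) with hd
  set D : Matrix (Fin m) (Fin m) ℂ := Matrix.diagonal d with hD
  have hW : Matrix.diagonal (fun i => (w i : ℂ)) = D * D := by
    rw [hD, Matrix.diagonal_mul_diagonal]
    refine congrArg Matrix.diagonal (funext fun i => ?_)
    rw [hd, ← Complex.ofReal_mul, Real.mul_self_sqrt (hw i).le]
  have hDH : Dᴴ = D := by
    rw [hD, Matrix.diagonal_conjTranspose]
    refine congrArg Matrix.diagonal (funext fun i => ?_)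
    simp [hd]
  have hdet1 : (1 + Matrix.diagonal (fun i => (w i : ℂ)) * R).det = (1 + D * R * D).det := by
    rw [hW, Matrix.mul_assoc, Matrix.det_one_add_mul_comm, Matrix.mul_assoc]
  set B : Matrix (Fin m) (Fin m) ℂ := 1 + D * R * D with hBdef
  have hS : (D * R * D).PosSemidef := by
    have := hR.conjTranspose_mul_mul_same D
    rwa [hDH] at this
  have hB : B.PosDef := Matrix.PosDef.one.add_posSemidef hS
  set β : Fin m → ℝ := hB.1.eigenvalues with hβdef
  have hβ : ∀ i, 0 < β i := hB.eigenvalues_pos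
  have hdetB : B.det = ((∏ i, β i : ℝ) : ℂ) := by
    rw [hB.1.det_eq_prod_eigenvalues]; norm_cast
  have hre : (1 + Matrix.diagonal (fun i => (w i : ℂ)) * R).det.re = ∏ i, β i := by
    rw [hdet1, hdetB, Complex.ofReal_re]
  have hβprod : 0 < ∏ i, β i := Finset.prod_pos fun i _ => hβ i
  refine ⟨by rw [hre]; exact hβprod, ?_⟩
  -- Now the conjugated matrix C = E B E with E = diag((1 + w q)^(-1/2))
  set e : Fin m → ℂ := fun i => ((Real.sqrt (1 + w i * q i)⁻¹ : ℝ) : ℂ) with he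
  set E : Matrix (Fin m) (Fin m) ℂ := Matrix.diagonal e with hE
  have he2 : ∀ i, e i * e i = (((1 + w i * q i)⁻¹ : ℝ) : ℂ) := fun i => by
    rw [he]
    rw [← Complex.ofReal_mul, Real.mul_self_sqrt (inv_nonneg.mpr (ha i).le)]
  set C : Matrix (Fin m) (Fin m) ℂ := E * B * E with hC
  have hCsplit : C = Matrix.diagonal (fun i => (((1 + w i * q i)⁻¹ : ℝ) : ℂ)) + E * (D * R * D) * E := by
    rw [hC, hBdef, Matrix.mul_add, Matrix.mul_one, Matrix.add_mul, hE,
      Matrix.diagonal_mul_diagonal]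
    congr 1
    exact congrArg Matrix.diagonal (funext fun i => he2 i)
  have hEH : Eᴴ = E := by
    rw [hE, Matrix.diagonal_conjTranspose]
    refine congrArg Matrix.diagonal (funext fun i => ?_)
    simp [he]
  have hCpd : C.PosDef := by
    rw [hCsplit]
    refine Matrix.PosDef.add_posSemidef ?_ ?_
    · exact Matrix.posDef_diagonal_iff.mpr fun i =>
        Complex.zero_lt_real.mpr (inv_pos.mpr (ha i))
    · have := hS.conjTranspose_mul_mul_same E
      rwa [hEH] at this
  set γ : Fin m → ℝ := hCpd.1.eigenvalues with hγdef
  have hγ : ∀ i, 0 < γ i := hCpd.eigenvalues_pos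
  have hdetC : C.det = ((∏ i, γ i : ℝ) : ℂ) := by
    rw [hCpd.1.det_eq_prod_eigenvalues]; norm_cast
  have hdetE : E.det = ((∏ i, Real.sqrt (1 + w i * q i)⁻¹ : ℝ) : ℂ) := by
    rw [hE, Matrix.det_diagonal, he]; push_cast [Complex.ofReal_prod]; rfl
  -- determinant relation
  have hdetrel : (∏ i, γ i) = (∏ i, Real.sqrt (1 + w i * q i)⁻¹) * (∏ i, β i)
      * (∏ i, Real.sqrt (1 + w i * q i)⁻¹) := by
    have : C.det = E.det * B.det * E.det := by
      rw [hC, Matrix.det_mul, Matrix.det_mul]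
    rw [hdetC, hdetE, hdetB] at this
    exact_mod_cast this
  have hp2 : (∏ i, Real.sqrt (1 + w i * q i)⁻¹) * (∏ i, Real.sqrt (1 + w i * q i)⁻¹)
      = (∏ i, (1 + w i * q i))⁻¹ := by
    rw [← Finset.prod_mul_distrib, ← Finset.prod_inv_distrib]
    exact Finset.prod_congr rfl fun i _ => Real.mul_self_sqrt (inv_nonneg.mpr (ha i).le)
  have hβγ : (∏ i, β i) = (∏ i, (1 + w i * q i)) * (∏ i, γ i) := by
    have hprodA : (0:ℝ) < ∏ i, (1 + w i * q i) := Finset.prod_pos fun i _ => ha i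
    have hx : ((∏ i, Real.sqrt (1 + w i * q i)⁻¹) * ∏ i, β i) * ∏ i, Real.sqrt (1 + w i * q i)⁻¹
        = (∏ i, (1 + w i * q i))⁻¹ * ∏ i, β i := by rw [← hp2]; ring
    rw [hdetrel, hx, ← mul_assoc, mul_inv_cancel₀ hprodA.ne', one_mul]
  -- trace relation
  have hCdiag : ∀ i, C i i = (((1 + w i * q i)⁻¹ : ℝ) : ℂ) * (1 + (w i : ℂ) * R i i) := by
    intro i
    have h1 : C i i = e i * B i i * e i := by
      rw [hC, hE]; simp [Matrix.mul_apply, Matrix.diagonal]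
    have h2 : B i i = 1 + (w i : ℂ) * R i i := by
      rw [hBdef]
      have : (D * R * D) i i = d i * R i i * d i := by
        rw [hD]; simp [Matrix.mul_apply, Matrix.diagonal]
      simp only [Matrix.add_apply, Matrix.one_apply_eq, this]
      congr 1
      rw [hd]
      rw [mul_comm, ← mul_assoc, ← Complex.ofReal_mul, Real.mul_self_sqrt (hw i).le]
    rw [h1, h2, mul_comm (e i) _, mul_assoc, he2 i, mul_comm]
  have htrγ : (∑ i, γ i) = ∑ i, (1 + w i * q i)⁻¹ * (1 + w i * (R i i).re) := by
    have h1 : C.trace = ∑ i, (γ i : ℂ) := trace_eq_sum_eigs hCpd.1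
    have h2 : C.trace = ∑ i, C i i := rfl
    have h3 : (∑ i, (γ i : ℂ)).re = ∑ i, γ i := by
      rw [← Complex.ofReal_sum, Complex.ofReal_re]
    rw [← h3, ← h1, h2, Complex.re_sum]
    refine Finset.sum_congr rfl fun i _ => ?_
    rw [hCdiag i]
    simp only [Complex.mul_re, Complex.add_re, Complex.one_re, Complex.one_im, Complex.add_im,
      Complex.ofReal_re, Complex.ofReal_im, Complex.mul_im]
    ring
  -- final chain
  rw [hre, hβγ]
  have hγexp : (∏ i, γ i) ≤ Real.exp (∑ i, (γ i - 1)) := by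
    rw [Real.exp_sum]
    refine Finset.prod_le_prod (fun i _ => (hγ i).le) fun i _ => ?_
    have h := Real.add_one_le_exp (γ i - 1)
    linarith
  have hsum_eq : ∑ i, (γ i - 1) = ∑ i, (w i / (1 + w i * q i)) * ((R i i).re - q i) := by
    rw [Finset.sum_sub_distrib, htrγ, ← Finset.sum_sub_distrib]
    refine Finset.sum_congr rfl fun i _ => ?_
    have hai := (ha i).ne'
    field_simp
    ring
  rw [hsum_eq] at hγexp
  have hprodA : (0:ℝ) ≤ ∏ i, (1 + w i * q i) :=
    (Finset.prod_pos fun i _ => ha i).le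
  exact mul_le_mul_of_nonneg_left hγexp hprodA

/-- Orthogonal channel `W = diag(w₁,…,w_m)`: the optimal covariance under the joint
constraints is the diagonal matrix with entries `min(P, 1/λ − 1/wᵢ)` (equal to `P`
when `λ = 0`), i.e. the entrywise minimum of the per-antenna-only optimum `P·I` and
the total-power-only water-filling optimum `(1/λ)·I − W⁻¹`. -/
theorem stmt10 (m : ℕ) (hm : 1 ≤ m) (w : Fin m → ℝ) (hw : ∀ i, 0 < w i)
    (P PT : ℝ) (hP : 0 < P) (hPT : 0 < PT)
    (hPlow : 1 / sInf (Set.range w) < P)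
    (hPTlow : ∑ i, (1 / sInf (Set.range w) - 1 / w i) < PT)
    (lam : ℝ) (hlam0 : 0 ≤ lam)
    (hlam1 : m * P ≤ PT → lam = 0)
    (hlam2 : PT < m * P → 0 < lam ∧ ∑ i, min P (1 / lam - 1 / w i) = PT) :
    (Matrix.diagonal (fun i => ((if lam = 0 then P else min P (1 / lam - 1 / w i) : ℝ) : ℂ))).PosDef ∧
    Matrix.diagonal (fun i => ((if lam = 0 then P else min P (1 / lam - 1 / w i) : ℝ) : ℂ))
      ∈ jointSet m PT P ∧
    ∀ R ∈ jointSet m PT P,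
      mutualInfo (Matrix.diagonal (fun i => (w i : ℂ))) R ≤
        mutualInfo (Matrix.diagonal (fun i => (w i : ℂ)))
          (Matrix.diagonal (fun i => ((if lam = 0 then P else min P (1 / lam - 1 / w i) : ℝ) : ℂ))) := by
  haveI : Nonempty (Fin m) := ⟨⟨0, hm⟩⟩
  have hmpos : (0:ℝ) < m := by exact_mod_cast hm
  set q : Fin m → ℝ := fun i => if lam = 0 then P else min P (1 / lam - 1 / w i) with hqdef
  set wmin := sInf (Set.range w) with hwmindef
  have hrange : (Set.range w).Finite := Set.finite_range w
  have hne : (Set.range w).Nonempty := Set.range_nonempty w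
  have hwmin_mem : wmin ∈ Set.range w := hne.csInf_mem hrange
  have hwmin_pos : 0 < wmin := by obtain ⟨j, hj⟩ := hwmin_mem; exact hj ▸ hw j
  have hwmin_le : ∀ i, wmin ≤ w i := fun i => csInf_le hrange.bddBelow ⟨i, rfl⟩
  -- when lam ≠ 0
  have hlamcase : lam ≠ 0 → 0 < lam ∧ (∑ i, min P (1 / lam - 1 / w i) = PT) ∧
      ∀ i, 0 < 1 / lam - 1 / w i := by
    intro hl
    have hPTm : PT < m * P := by
      by_contra h
      push_neg at h
      exact hl (hlam1 h)
    obtain ⟨hlp, hsum⟩ := hlam2 hPTm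
    have h1 : PT ≤ ∑ i, (1 / lam - 1 / w i) :=
      hsum ▸ Finset.sum_le_sum (fun i _ => min_le_right _ _)
    have h2 : ∑ i, (1 / wmin - 1 / w i) < ∑ i, (1 / lam - 1 / w i) := hPTlow.trans_le h1
    rw [Finset.sum_sub_distrib, Finset.sum_sub_distrib, sub_lt_sub_iff_right,
      Finset.sum_const, Finset.sum_const, Finset.card_univ, Fintype.card_fin,
      nsmul_eq_mul, nsmul_eq_mul] at h2
    have hwl : 1 / wmin < 1 / lam := lt_of_mul_lt_mul_left h2 hmpos.le
    refine ⟨hlp, hsum, fun i => ?_⟩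
    have : 1 / w i ≤ 1 / wmin := one_div_le_one_div_of_le hwmin_pos (hwmin_le i)
    linarith
  have hq_pos : ∀ i, 0 < q i := by
    intro i
    rw [hqdef]
    by_cases hl : lam = 0
    · simp [hl, hP]
    · simp only [hl, if_false]
      exact lt_min hP ((hlamcase hl).2.2 i)
  have hq_leP : ∀ i, q i ≤ P := by
    intro i
    rw [hqdef]
    by_cases hl : lam = 0
    · simp [hl]
    · simp only [hl, if_false]; exact min_le_left _ _
  have hq_sum : ∑ i, q i ≤ PT := by
    by_cases hl : lam = 0
    · have hmP : (m:ℝ) * P ≤ PT := by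
        by_contra h
        push_neg at h
        exact (hlam2 h).1.ne' hl
      calc ∑ i, q i = m * P := by
            simp [hqdef, hl, Finset.sum_const, Finset.card_univ, nsmul_eq_mul]
        _ ≤ PT := hmP
    · have := (hlamcase hl).2.1
      have hqe : ∑ i, q i = PT := by
        rw [← this]; exact Finset.sum_congr rfl fun i _ => by simp [hqdef, hl]
      exact hqe.le
  have ha : ∀ i, 0 < 1 + w i * q i := fun i => by
    have := mul_pos (hw i) (hq_pos i); linarith
  -- gradient bound
  have hgrad : ∀ (i : Fin m) (r : ℝ), r ≤ P →
      (w i / (1 + w i * q i)) * (r - q i) ≤ lam * (r - q i) := by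
    intro i r hr
    by_cases hl : lam = 0
    · have hqi : q i = P := by simp [hqdef, hl]
      have hg : 0 ≤ w i / (1 + w i * q i) := div_nonneg (hw i).le (ha i).le
      have : (w i / (1 + w i * q i)) * (r - q i) ≤ 0 :=
        mul_nonpos_of_nonneg_of_nonpos hg (by rw [hqi]; linarith)
      rw [hl, zero_mul]
      exact this
    · obtain ⟨hlp, -, hinv⟩ := hlamcase hl
      have hqi : q i = min P (1 / lam - 1 / w i) := by simp [hqdef, hl]
      rcases le_or_gt (1 / lam - 1 / w i) P with h | h
      · -- interior: gradient equals lam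
        have hqe : q i = 1 / lam - 1 / w i := by rw [hqi, min_eq_right h]
        have hden : 1 + w i * q i = w i / lam := by
          rw [hqe]; field_simp [hlp.ne', (hw i).ne']; ring
        have : w i / (1 + w i * q i) = lam := by
          rw [hden, div_div_eq_mul_div, mul_div_cancel_left₀ _ (hw i).ne']
        rw [this]
      · -- clipped at P: gradient ≥ lam and r - q ≤ 0
        have hqe : q i = P := by rw [hqi, min_eq_left h.le]
        have hlg : lam ≤ w i / (1 + w i * q i) := by
          rw [hqe, le_div_iff₀ (by nlinarith [mul_pos (hw i) hP] : (0:ℝ) < 1 + w i * P)]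
          have h1 : P + 1 / w i < 1 / lam := by linarith
          have h2 : (P + 1 / w i) * lam < 1 := by
            rw [← lt_div_iff₀ hlp]
            simpa using h1
          have h3 : w i * ((P + 1 / w i) * lam) < w i * 1 :=
            mul_lt_mul_of_pos_left h2 (hw i)
          have h4 : w i * (1 / w i) = 1 := mul_one_div_cancel (hw i).ne'
          nlinarith
        exact mul_le_mul_of_nonpos_right hlg (by rw [hqe]; linarith)
  -- the optimum value
  have hRq : (1 + Matrix.diagonal (fun i => (w i : ℂ)) *
      Matrix.diagonal (fun i => ((q i : ℝ) : ℂ))) =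
      Matrix.diagonal (fun i => (((1 + w i * q i : ℝ)) : ℂ)) := by
    rw [Matrix.diagonal_mul_diagonal, ← Matrix.diagonal_one, Matrix.diagonal_add]
    refine congrArg Matrix.diagonal (funext fun i => ?_)
    push_cast
    ring
  have hoptval : (1 + Matrix.diagonal (fun i => (w i : ℂ)) *
      Matrix.diagonal (fun i => ((q i : ℝ) : ℂ))).det.re = ∏ i, (1 + w i * q i) := by
    rw [hRq, Matrix.det_diagonal, ← Complex.ofReal_prod, Complex.ofReal_re]
  refine ⟨?_, ⟨?_, ?_, ?_⟩, ?_⟩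
  · exact Matrix.posDef_diagonal_iff.mpr fun i => Complex.zero_lt_real.mpr (hq_pos i)
  · exact (Matrix.posDef_diagonal_iff.mpr fun i =>
      Complex.zero_lt_real.mpr (hq_pos i)).posSemidef
  · rw [Matrix.trace_diagonal, ← Complex.ofReal_sum, Complex.ofReal_re]
    exact hq_sum
  · intro i
    rw [Matrix.diagonal_apply_eq, Complex.ofReal_re]
    exact hq_leP i
  · rintro R ⟨hRpsd, hRtr, hRdiag⟩
    obtain ⟨hpos, hbound⟩ := key_bound w q hw hq_pos hRpsd
    have hsumt : ∑ i, (w i / (1 + w i * q i)) * ((R i i).re - q i) ≤ 0 := by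
      have h1 : ∑ i, (w i / (1 + w i * q i)) * ((R i i).re - q i) ≤
          ∑ i, lam * ((R i i).re - q i) :=
        Finset.sum_le_sum fun i _ => hgrad i _ (hRdiag i)
      have h2 : ∑ i, lam * ((R i i).re - q i) = lam * (∑ i, (R i i).re - ∑ i, q i) := by
        rw [← Finset.mul_sum, Finset.sum_sub_distrib]
      have h3 : ∑ i, (R i i).re ≤ PT := by
        have : R.trace.re = ∑ i, (R i i).re := by
          rw [Matrix.trace, Complex.re_sum]; rfl
        rw [← this]; exact hRtr
      by_cases hl : lam = 0
      · rw [h2, hl, zero_mul] at h1; exact h1.trans le_rfl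
      · obtain ⟨hlp, hsum, -⟩ := hlamcase hl
        have hqPT : ∑ i, q i = PT := by
          rw [← hsum]; exact Finset.sum_congr rfl fun i _ => by simp [hqdef, hl]
        have : lam * (∑ i, (R i i).re - ∑ i, q i) ≤ 0 :=
          mul_nonpos_of_nonneg_of_nonpos hlp.le (by rw [hqPT]; linarith)
        rw [h2] at h1; exact h1.trans this
    have hfin : (1 + Matrix.diagonal (fun i => (w i : ℂ)) * R).det.re ≤
        ∏ i, (1 + w i * q i) := by
      refine hbound.trans ?_
      have : Real.exp (∑ i, (w i / (1 + w i * q i)) * ((R i i).re - q i)) ≤ 1 :=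
        Real.exp_le_one_iff.mpr hsumt
      calc (∏ i, (1 + w i * q i)) * Real.exp (∑ i, (w i / (1 + w i * q i)) * ((R i i).re - q i))
          ≤ (∏ i, (1 + w i * q i)) * 1 :=
            mul_le_mul_of_nonneg_left this (Finset.prod_pos fun i _ => ha i).le
        _ = ∏ i, (1 + w i * q i) := mul_one _
    unfold mutualInfo
    rw [hoptval]
    exact Real.log_le_log hpos hfin
end

section
/- Let W be an m×m complex Hermitian positive definite matrix. Then C_TPC(P_T) − m·log(P_T/m) → log det(W) as P_T → +∞; i.e., at high SNR the total-power-constrained capacity is asymptotically achieved by the isotropic covariance (P_T/m)·I. -/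
open Matrix ComplexOrder

/-- The total-power-only constraint set and its capacity. -/
def tpcSet (m : ℕ) (Q : ℝ) : Set (Matrix (Fin m) (Fin m) ℂ) :=
  {R | R.PosSemidef ∧ R.trace.re ≤ Q}

noncomputable def Ctpc (m : ℕ) (W : Matrix (Fin m) (Fin m) ℂ) (Q : ℝ) : ℝ :=
  sSup (mutualInfo W '' tpcSet m Q)

section Aux

lemma trace_eq_sum_eigen {n : ℕ} {M : Matrix (Fin n) (Fin n) ℂ} (hM : M.IsHermitian) :
    M.trace = ∑ i, (hM.eigenvalues i : ℂ) := by
  conv_lhs => rw [hM.spectral_theorem]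
  rw [Unitary.conjStarAlgAut_apply, Matrix.trace_mul_cycle,
    Matrix.mem_unitaryGroup_iff'.mp (hM.eigenvectorUnitary).2, Matrix.one_mul,
    Matrix.trace_diagonal]
  simp

lemma trace_re_eq {n : ℕ} {M : Matrix (Fin n) (Fin n) ℂ} (hM : M.IsHermitian) :
    M.trace.re = ∑ i, hM.eigenvalues i := by
  rw [trace_eq_sum_eigen hM]; norm_cast

lemma det_re_eq {n : ℕ} {M : Matrix (Fin n) (Fin n) ℂ} (hM : M.IsHermitian) :
    M.det.re = ∏ i, hM.eigenvalues i := by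
  rw [hM.det_eq_prod_eigenvalues]; norm_cast

lemma det_im_eq {n : ℕ} {M : Matrix (Fin n) (Fin n) ℂ} (hM : M.IsHermitian) :
    M.det.im = 0 := by
  rw [hM.det_eq_prod_eigenvalues]; norm_cast

lemma det_re_pos {n : ℕ} {M : Matrix (Fin n) (Fin n) ℂ} (hM : M.PosDef) :
    0 < M.det.re := by
  rw [det_re_eq hM.isHermitian]
  exact Finset.prod_pos fun i _ => hM.eigenvalues_pos i

lemma trace_re_pos {n : ℕ} (hn : 0 < n) {M : Matrix (Fin n) (Fin n) ℂ} (hM : M.PosDef) :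
    0 < M.trace.re := by
  rw [trace_re_eq hM.isHermitian]
  exact Finset.sum_pos (fun i _ => hM.eigenvalues_pos i)
    (by simp [Finset.univ_nonempty_iff, Fin.pos_iff_nonempty.mp hn])

lemma logdet_le {n : ℕ} (hn : 0 < n) {M : Matrix (Fin n) (Fin n) ℂ} (hM : M.PosDef) :
    Real.log M.det.re ≤ n * Real.log (M.trace.re / n) := by
  set ev := hM.isHermitian.eigenvalues with hev
  have hpos : ∀ i, 0 < ev i := fun i => hM.eigenvalues_pos i
  have hS : M.trace.re = ∑ i, ev i := trace_re_eq hM.isHermitian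
  have hSpos : 0 < M.trace.re := trace_re_pos hn hM
  set S := M.trace.re
  have hnn : (0:ℝ) < n := by exact_mod_cast hn
  have hdet : M.det.re = ∏ i, ev i := det_re_eq hM.isHermitian
  rw [hdet, Real.log_prod (fun i _ => (hpos i).ne')]
  have key : ∀ i, Real.log (ev i) ≤ ev i * (n / S) - 1 + Real.log (S / n) := by
    intro i
    have h1 : Real.log (ev i * (n / S)) ≤ ev i * (n / S) - 1 :=
      Real.log_le_sub_one_of_pos (mul_pos (hpos i) (div_pos hnn hSpos))
    have h2 : Real.log (ev i) = Real.log (ev i * (n / S)) + Real.log (S / n) := by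
      rw [Real.log_mul (hpos i).ne' (div_pos hnn hSpos).ne',
        Real.log_div hnn.ne' hSpos.ne', Real.log_div hSpos.ne' hnn.ne']
      ring
    linarith
  calc ∑ i, Real.log (ev i) ≤ ∑ i, (ev i * (n / S) - 1 + Real.log (S / n)) :=
        Finset.sum_le_sum (fun i _ => key i)
    _ = (∑ i, ev i) * (n / S) - n + n * Real.log (S / n) := by
        rw [Finset.sum_add_distrib, Finset.sum_sub_distrib, ← Finset.sum_mul]
        simp [mul_comm]
    _ = n * Real.log (S / n) := by
        rw [← hS]
        field_simp
        ring

variable {m : ℕ} {W : Matrix (Fin m) (Fin m) ℂ}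

lemma mutualInfo_le (hm : 0 < m) (hW : W.PosDef) {Q : ℝ}
    {R : Matrix (Fin m) (Fin m) ℂ} (hR : R ∈ tpcSet m Q) :
    mutualInfo W R ≤ Real.log W.det.re + m * Real.log ((W⁻¹.trace.re + Q) / m) := by
  obtain ⟨hRpsd, hRtr⟩ := hR
  have hM : (W⁻¹ + R).PosDef := hW.inv.add_posSemidef hRpsd
  have hWM : W * (W⁻¹ + R) = 1 + W * R := by
    rw [Matrix.mul_add, Matrix.mul_nonsing_inv _ ((Matrix.isUnit_iff_isUnit_det _).1 hW.isUnit)]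
  have hdet : (1 + W * R).det = W.det * (W⁻¹ + R).det := by
    rw [← hWM, Matrix.det_mul]
  have hre : (1 + W * R).det.re = W.det.re * (W⁻¹ + R).det.re := by
    rw [hdet, Complex.mul_re, det_im_eq hW.isHermitian, det_im_eq hM.isHermitian]
    ring
  have htrpos : 0 < (W⁻¹ + R).trace.re := trace_re_pos hm hM
  have htreq : (W⁻¹ + R).trace.re = W⁻¹.trace.re + R.trace.re := by
    rw [Matrix.trace_add, Complex.add_re]
  have hmr : (0:ℝ) < m := by exact_mod_cast hm
  rw [mutualInfo, hre, Real.log_mul (det_re_pos hW).ne' (det_re_pos hM).ne']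
  gcongr
  calc Real.log (W⁻¹ + R).det.re ≤ m * Real.log ((W⁻¹ + R).trace.re / m) := logdet_le hm hM
    _ ≤ m * Real.log ((W⁻¹.trace.re + Q) / m) := by
        have hle : (W⁻¹ + R).trace.re ≤ W⁻¹.trace.re + Q := by rw [htreq]; linarith
        exact mul_le_mul_of_nonneg_left
          (Real.log_le_log (div_pos htrpos hmr) ((div_le_div_iff_of_pos_right hmr).2 hle)) hmr.le

lemma smul_one_mem (_hm : 0 < m) {c : ℝ} (hc : 0 ≤ c) :
    ((c : ℂ) • (1 : Matrix (Fin m) (Fin m) ℂ)) ∈ tpcSet m (c * m) := by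
  constructor
  · rw [Matrix.smul_one_eq_diagonal]
    rw [Matrix.posSemidef_diagonal_iff]
    intro i
    exact_mod_cast Complex.zero_le_real.2 hc
  · rw [Matrix.trace_smul, Matrix.trace_one]
    simp

lemma mutualInfo_smul (_hm : 0 < m) (hW : W.PosDef) {c : ℝ} (hc : 0 < c) :
    mutualInfo W ((c : ℂ) • 1) =
      m * Real.log c + Real.log ((((c⁻¹ : ℝ) : ℂ) • 1 + W).det.re) := by
  have hA : (((c⁻¹ : ℝ) : ℂ) • (1 : Matrix (Fin m) (Fin m) ℂ) + W).PosDef := by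
    refine Matrix.PosDef.posSemidef_add ?_ hW
    rw [Matrix.smul_one_eq_diagonal, Matrix.posSemidef_diagonal_iff]
    intro i
    exact_mod_cast Complex.zero_le_real.2 (inv_pos.2 hc).le
  have h1 : (1 : Matrix (Fin m) (Fin m) ℂ) + W * ((c : ℂ) • 1) =
      (c : ℂ) • (((c⁻¹ : ℝ) : ℂ) • 1 + W) := by
    rw [mul_smul_comm, Matrix.mul_one, smul_add, smul_smul, ← Complex.ofReal_mul,
      mul_inv_cancel₀ hc.ne', Complex.ofReal_one, one_smul]
  rw [mutualInfo, h1, Matrix.det_smul]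
  rw [show ((c:ℂ) ^ Fintype.card (Fin m)) = ((c ^ m : ℝ) : ℂ) by push_cast [Fintype.card_fin]; ring]
  rw [Complex.re_ofReal_mul, Real.log_mul (by positivity) (det_re_pos hA).ne', Real.log_pow]

end Aux

/-- High-SNR asymptotics of the total-power-constrained capacity:
`C_TPC(P_T) − m·log(P_T/m) → log det W` as `P_T → ∞`. -/
theorem stmt13 (m : ℕ) (hm : 1 ≤ m) (W : Matrix (Fin m) (Fin m) ℂ) (hW : W.PosDef) :
    Filter.Tendsto (fun PT : ℝ => Ctpc m W PT - m * Real.log (PT / m))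
      Filter.atTop (nhds (Real.log W.det.re)) := by
  have hm0 : 0 < m := hm
  have hmr : (0:ℝ) < m := by exact_mod_cast hm0
  set t := W⁻¹.trace.re with ht
  have htpos : 0 < t := trace_re_pos hm0 hW.inv
  -- lower and upper bounding functions
  set g : ℝ → ℝ := fun Q => Real.log (((((Q / m)⁻¹ : ℝ) : ℂ) • 1 + W).det.re) with hg
  set h : ℝ → ℝ := fun Q =>
    Real.log W.det.re + (m * Real.log ((t + Q) / m) - m * Real.log (Q / m)) with hh
  have hbound : ∀ Q : ℝ, 0 < Q →
      g Q ≤ Ctpc m W Q - m * Real.log (Q / m) ∧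
      Ctpc m W Q - m * Real.log (Q / m) ≤ h Q := by
    intro Q hQ
    have hc : (0:ℝ) < Q / m := div_pos hQ hmr
    have hmem : (((Q / m : ℝ) : ℂ) • (1 : Matrix (Fin m) (Fin m) ℂ)) ∈ tpcSet m Q := by
      have := smul_one_mem hm0 hc.le
      rwa [div_mul_cancel₀ _ hmr.ne'] at this
    have hub : ∀ x ∈ mutualInfo W '' tpcSet m Q,
        x ≤ Real.log W.det.re + m * Real.log ((t + Q) / m) := by
      rintro x ⟨R, hR, rfl⟩
      exact mutualInfo_le hm0 hW hR
    have hbdd : BddAbove (mutualInfo W '' tpcSet m Q) := ⟨_, hub⟩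
    have hne : (mutualInfo W '' tpcSet m Q).Nonempty := ⟨_, Set.mem_image_of_mem _ hmem⟩
    constructor
    · have hle : mutualInfo W (((Q / m : ℝ) : ℂ) • 1) ≤ Ctpc m W Q :=
        le_csSup hbdd (Set.mem_image_of_mem _ hmem)
      rw [mutualInfo_smul hm0 hW hc] at hle
      simp only [hg]
      linarith
    · simp only [hh]
      have : Ctpc m W Q ≤ Real.log W.det.re + m * Real.log ((t + Q) / m) := csSup_le hne hub
      linarith
  have hev : ∀ᶠ Q in Filter.atTop, (0:ℝ) < Q := Filter.eventually_gt_atTop 0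
  -- limit of g
  have hgto : Filter.Tendsto g Filter.atTop (nhds (Real.log W.det.re)) := by
    have hinv : Filter.Tendsto (fun Q : ℝ => (Q / m)⁻¹) Filter.atTop (nhds 0) := by
      apply Filter.Tendsto.inv_tendsto_atTop
      exact Filter.Tendsto.atTop_div_const hmr Filter.tendsto_id
    have hc1 : Continuous (fun ε : ℝ => (((ε : ℂ) • 1 + W :
        Matrix (Fin m) (Fin m) ℂ)).det.re) := by
      apply Complex.continuous_re.comp
      apply Continuous.matrix_det
      exact (Complex.continuous_ofReal.smul continuous_const).add continuous_const
    have hcont : ContinuousAt (fun ε : ℝ => Real.log ((((ε : ℂ) • 1 + W :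
        Matrix (Fin m) (Fin m) ℂ)).det.re)) 0 := by
      refine (Real.continuousAt_log ?_).comp hc1.continuousAt
      simp only [Complex.ofReal_zero, zero_smul, zero_add]
      exact (det_re_pos hW).ne'
    have := hcont.tendsto.comp hinv
    simp only [Function.comp_def, Complex.ofReal_zero, zero_smul, zero_add] at this
    exact this
  -- limit of h
  have hhto : Filter.Tendsto h Filter.atTop (nhds (Real.log W.det.re)) := by
    have key : Filter.Tendsto (fun Q : ℝ => m * Real.log ((t + Q) / m) - m * Real.log (Q / m))
        Filter.atTop (nhds 0) := by
      have heq : ∀ᶠ Q in Filter.atTop,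
          m * Real.log ((t + Q) / m) - m * Real.log (Q / m) = m * Real.log ((t + Q) / Q) := by
        filter_upwards [hev] with Q hQ
        have h1 : (0:ℝ) < t + Q := by linarith
        rw [Real.log_div h1.ne' hmr.ne', Real.log_div hQ.ne' hmr.ne',
          Real.log_div h1.ne' hQ.ne']
        ring
      rw [Filter.tendsto_congr' heq]
      have h2 : Filter.Tendsto (fun Q : ℝ => (t + Q) / Q) Filter.atTop (nhds 1) := by
        have : ∀ᶠ Q in Filter.atTop, (t + Q) / Q = t / Q + 1 := by
          filter_upwards [hev] with Q hQ
          field_simp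
        rw [Filter.tendsto_congr' this]
        simpa using Filter.Tendsto.add_const 1
          (Filter.Tendsto.div_atTop (tendsto_const_nhds (x := t)) Filter.tendsto_id)
      have h3 : Filter.Tendsto (fun Q : ℝ => Real.log ((t + Q) / Q)) Filter.atTop (nhds 0) := by
        have := (Real.continuousAt_log one_ne_zero).tendsto.comp h2
        simpa [Function.comp_def] using this
      simpa using h3.const_mul (m : ℝ)
    have := key.const_add (Real.log W.det.re)
    simpa [hh] using this
  refine tendsto_of_tendsto_of_tendsto_of_le_of_le' hgto hhto ?_ ?_
  · filter_upwards [hev] with Q hQ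
    exact (hbound Q hQ).1
  · filter_upwards [hev] with Q hQ
    exact (hbound Q hQ).2
end
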